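/- Uniform bound for Dyson-represented spin fluctuation operators: for n ∈ ℕ, ψ_n in the n-particle subspace 𝒟_n, v ∈ ℓ¹₃(L), and J ∈ (1/2)ℕ₀ with 2J > n, ‖F_J(v) ψ_n‖ ≤ 4 |v|₁ (n+1)^{1/2} ‖ψ_n‖, where F_J(v) = P_J { Σ_x ṽ⁺_x a*_x g_J(x)^{1/2} + ṽ⁻_x g_J(x)^{1/2} a_x − (2/J)^{1/2} ṽ³_x a*_x a_x } P_J. -/

import Mathlib

/-- Total particle number of an occupation-number configuration. -/
def deg {L : Type*} (m : L →₀ ℕ) : ℕ := m.sum fun _ k => k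

/-- The algebraic `n`-particle subspace: the span of the occupation-number basis
vectors with total particle number `n`. -/
def nSector {L : Type*} {F : Type*} [NormedAddCommGroup F] [InnerProductSpace ℂ F]
    (e : (L →₀ ℕ) → F) (n : ℕ) : Submodule ℂ F :=
  Submodule.span ℂ (e '' {m | deg m = n})

/-- Dyson's function `g_J(k) = max(1 − k/(2J), 0)`, written in terms of `2J`. -/
noncomputable def gDyson (twoJ : ℝ) (k : ℕ) : ℝ := max (1 - k / twoJ) 0

/-- The `ℓ¹`-norm of an `ℝ³`-valued sequence given by its rotated components
(transverse component `vt x = ṽ¹_x + iṽ²_x` and third component `v3 x = ṽ³_x`). -/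
noncomputable def l1norm {L : Type*} (vt : L → ℂ) (v3 : L → ℝ) : ℝ :=
  ∑' x, Real.sqrt (‖vt x‖ ^ 2 + v3 x ^ 2)

lemma aux_norm_sq_sum_smul {ι κ F : Type*} [NormedAddCommGroup F] [InnerProductSpace ℂ F]
    {e : κ → F} (he : Orthonormal ℂ e) (s : Finset ι) (d : ι → ℂ) (f : ι → κ)
    (hf : ∀ m ∈ s, ∀ m' ∈ s, d m ≠ 0 → d m' ≠ 0 → f m = f m' → m = m') :
    ‖∑ m ∈ s, d m • e (f m)‖ ^ 2 = ∑ m ∈ s, ‖d m‖ ^ 2 := by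
  have key : (inner ℂ (∑ m ∈ s, d m • e (f m)) (∑ m ∈ s, d m • e (f m)) : ℂ)
      = ∑ m ∈ s, ((‖d m‖ : ℂ)) ^ 2 := by
    rw [sum_inner]
    refine Finset.sum_congr rfl fun m hm => ?_
    rw [inner_smul_left, inner_sum]
    by_cases hdm : d m = 0
    · simp [hdm]
    · have : ∑ m' ∈ s, (inner ℂ (e (f m)) (d m' • e (f m')) : ℂ) = d m := by
        rw [Finset.sum_eq_single m]
        · rw [inner_smul_right]
          simp [inner_self_eq_norm_sq_to_K, he.1]
        · intro m' hm' hne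
          rw [inner_smul_right]
          by_cases hdm' : d m' = 0
          · simp [hdm']
          · have hfe : f m ≠ f m' := fun h => hne ((hf m' hm' m hm hdm' hdm h.symm))
            rw [he.2 hfe, mul_zero]
        · intro h; exact absurd hm h
      rw [this, RCLike.conj_mul]
      norm_cast
  calc ‖∑ m ∈ s, d m • e (f m)‖ ^ 2
      = RCLike.re (inner ℂ (∑ m ∈ s, d m • e (f m)) (∑ m ∈ s, d m • e (f m)) : ℂ) :=
        (inner_self_eq_norm_sq _).symm
    _ = RCLike.re (∑ m ∈ s, ((‖d m‖ : ℂ)) ^ 2) := by rw [key]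
    _ = ∑ m ∈ s, ‖d m‖ ^ 2 := by
        rw [map_sum]
        refine Finset.sum_congr rfl fun m _ => ?_
        norm_cast

lemma aux_norm_sum_le {κ F : Type*} [NormedAddCommGroup F] [InnerProductSpace ℂ F]
    {e : κ → F} (he : Orthonormal ℂ e) (s : Finset κ) (d c : κ → ℂ) (f : κ → κ)
    (hf : ∀ m ∈ s, ∀ m' ∈ s, d m ≠ 0 → d m' ≠ 0 → f m = f m' → m = m')
    (B : ℝ) (hB : 0 ≤ B) (hd : ∀ m ∈ s, ‖d m‖ ≤ B * ‖c m‖) :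
    ‖∑ m ∈ s, d m • e (f m)‖ ≤ B * ‖∑ m ∈ s, c m • e m‖ := by
  have h1 := aux_norm_sq_sum_smul he s d f hf
  have h2 := aux_norm_sq_sum_smul he s c id (fun m _ m' _ _ _ h => h)
  simp only [id] at h2
  have hle : ‖∑ m ∈ s, d m • e (f m)‖ ^ 2 ≤ (B * ‖∑ m ∈ s, c m • e m‖) ^ 2 := by
    rw [h1, mul_pow, h2, Finset.mul_sum]
    refine Finset.sum_le_sum fun m hm => ?_
    have := hd m hm
    have h0 : (0:ℝ) ≤ ‖d m‖ := norm_nonneg _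
    nlinarith [norm_nonneg (c m)]
  exact (pow_le_pow_iff_left₀ (norm_nonneg _) (by positivity) two_ne_zero).mp hle

lemma aux_le_deg {L : Type*} (m : L →₀ ℕ) (x : L) : m x ≤ deg m := by
  unfold deg
  by_cases h : m x = 0
  · simp [h]
  · exact Finset.single_le_sum (f := fun y => m y) (fun _ _ => Nat.zero_le _)
      (Finsupp.mem_support_iff.mpr h)

lemma aux_sub_single_inj {L : Type*} {x : L} {m m' : L →₀ ℕ} (hm : m x ≠ 0) (hm' : m' x ≠ 0)
    (h : m - Finsupp.single x 1 = m' - Finsupp.single x 1) : m = m' := by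
  ext y
  have h2 := DFunLike.congr_fun h y
  simp only [Finsupp.tsub_apply] at h2
  rcases eq_or_ne y x with rfl | hy
  · simp only [Finsupp.single_eq_same] at h2; omega
  · simpa [Finsupp.single_apply, Ne.symm hy] using h2

lemma aux_add_single_inj {L : Type*} {x : L} {m m' : L →₀ ℕ}
    (h : m + Finsupp.single x 1 = m' + Finsupp.single x 1) : m = m' := by
  ext y
  have h2 := DFunLike.congr_fun h y
  simp only [Finsupp.add_apply] at h2
  omega


/-- Uniform bound for Dyson-represented spin fluctuation operators: for `ψ` in the
`n`-particle subspace, `v ∈ ℓ¹₃(L)`, and `2J > n`,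
`‖F_J(v)ψ‖ ≤ 4|v|₁ (n+1)^(1/2) ‖ψ‖`. -/
theorem stmt13 {L : Type*} {F : Type*} [NormedAddCommGroup F] [InnerProductSpace ℂ F]
    [CompleteSpace F]
    -- the occupation-number orthonormal basis of Fock space
    (e : (L →₀ ℕ) → F) (he : Orthonormal ℂ e)
    -- spin magnitude `J ∈ (1/2)ℕ₀`
    (mJ : ℕ) (hmJ : 0 < mJ) (J : ℝ) (hJ : 2 * J = mJ)
    -- rotated components of `v ∈ ℓ¹₃(L)`
    (vt : L → ℂ) (v3 : L → ℝ)
    (hv1 : Summable fun x => Real.sqrt (‖vt x‖ ^ 2 + v3 x ^ 2))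
    -- the Dyson spin-wave representation `F_J(v)` of the fluctuation operator
    (FJ : F →ₗ[ℂ] F)
    (hFJ0 : ∀ m : L →₀ ℕ, (∃ x, (2 * J : ℝ) < m x) → FJ (e m) = 0)
    (hFJ : ∀ m : L →₀ ℕ, (∀ x, (m x : ℝ) ≤ 2 * J) →
      FJ (e m) = ∑' x : L,
          (((vt x) * Real.sqrt ((m x + 1) * gDyson (2 * J) (m x))) • e (m + Finsupp.single x 1)
            + ((starRingEnd ℂ) (vt x) * Real.sqrt ((m x) * gDyson (2 * J) (m x - 1))) •
                e (m - Finsupp.single x 1)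
            + (-((Real.sqrt (4 / (2 * J)) * v3 x * m x : ℝ) : ℂ)) • e m))
    (n : ℕ) (hn : (n : ℝ) < 2 * J) (ψ : F) (hψ : ψ ∈ nSector e n) :
    ‖FJ ψ‖ ≤ 4 * l1norm vt v3 * Real.sqrt (n + 1) * ‖ψ‖ := by
  classical
  obtain ⟨c, hc, hψeq⟩ := (Finsupp.mem_span_image_iff_linearCombination ℂ).mp hψ
  rw [Finsupp.mem_supported] at hc
  set s := c.support with hs
  have hψsum : ψ = ∑ m ∈ s, c m • e m := by
    rw [← hψeq, Finsupp.linearCombination_apply, Finsupp.sum]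
  -- basic facts
  have hJ0 : (0:ℝ) < 2 * J := by rw [hJ]; positivity
  have hn1 : (n:ℝ) + 1 ≤ 2 * J := by
    rw [hJ] at hn ⊢
    have : n < mJ := by exact_mod_cast hn
    exact_mod_cast this
  have hg0 : ∀ k : ℕ, 0 ≤ gDyson (2*J) k := fun k => le_max_right _ _
  have hg1 : ∀ k : ℕ, gDyson (2*J) k ≤ 1 := fun k =>
    max_le (sub_le_self _ (by positivity)) zero_le_one
  have hdegm : ∀ m ∈ s, deg m = n := fun m hm => hc hm
  have hmx : ∀ m ∈ s, ∀ x, (m x : ℝ) ≤ n := by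
    intro m hm x
    exact_mod_cast (hdegm m hm) ▸ aux_le_deg m x
  have hmle : ∀ m ∈ s, ∀ x, (m x : ℝ) ≤ 2 * J := fun m hm x =>
    (hmx m hm x).trans (le_of_lt hn)
  set w : L → ℝ := fun x => Real.sqrt (‖vt x‖ ^ 2 + v3 x ^ 2) with hw
  have hw0 : ∀ x, 0 ≤ w x := fun x => Real.sqrt_nonneg _
  have hvtw : ∀ x, ‖vt x‖ ≤ w x := by
    intro x
    rw [hw]
    have : ‖vt x‖ = Real.sqrt (‖vt x‖ ^ 2) := by
      rw [Real.sqrt_sq (norm_nonneg _)]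
    rw [this]
    exact Real.sqrt_le_sqrt (le_add_of_nonneg_right (sq_nonneg _))
  have hv3w : ∀ x, |v3 x| ≤ w x := by
    intro x
    rw [hw]
    have : |v3 x| = Real.sqrt (v3 x ^ 2) := (Real.sqrt_sq_eq_abs _).symm
    rw [this]
    exact Real.sqrt_le_sqrt (le_add_of_nonneg_left (sq_nonneg _))
  set Q : ℝ := Real.sqrt (n + 1) with hQ
  have hQ0 : 0 < Q := Real.sqrt_pos.mpr (by positivity)
  -- the summand
  set t : L → (L →₀ ℕ) → F := fun x m =>
      ((vt x) * Real.sqrt ((m x + 1) * gDyson (2 * J) (m x))) • e (m + Finsupp.single x 1)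
        + ((starRingEnd ℂ) (vt x) * Real.sqrt ((m x) * gDyson (2 * J) (m x - 1))) •
            e (m - Finsupp.single x 1)
        + (-((Real.sqrt (4 / (2 * J)) * v3 x * m x : ℝ) : ℂ)) • e m with ht
  -- coefficient bounds
  have hb1 : ∀ x, ∀ m ∈ s,
      ‖(vt x * Real.sqrt (((m x : ℝ) + 1) * gDyson (2 * J) (m x)) : ℂ)‖ ≤ w x * Q := by
    intro x m hm
    rw [norm_mul, Complex.norm_real, Real.norm_eq_abs,
      abs_of_nonneg (Real.sqrt_nonneg _)]
    have harg : ((m x : ℝ) + 1) * gDyson (2 * J) (m x) ≤ (n : ℝ) + 1 := by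
      calc ((m x : ℝ) + 1) * gDyson (2 * J) (m x) ≤ ((n : ℝ) + 1) * 1 :=
            mul_le_mul (by linarith [hmx m hm x]) (hg1 _) (hg0 _) (by positivity)
        _ = (n : ℝ) + 1 := mul_one _
    have := Real.sqrt_le_sqrt harg
    exact mul_le_mul (hvtw x) (by rw [hQ]; exact this) (Real.sqrt_nonneg _) (hw0 x)
  have hb2 : ∀ x, ∀ m ∈ s,
      ‖((starRingEnd ℂ) (vt x) * Real.sqrt ((m x : ℝ) * gDyson (2 * J) (m x - 1)) : ℂ)‖
        ≤ w x * Q := by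
    intro x m hm
    rw [norm_mul, RCLike.norm_conj, Complex.norm_real, Real.norm_eq_abs,
      abs_of_nonneg (Real.sqrt_nonneg _)]
    have harg : (m x : ℝ) * gDyson (2 * J) (m x - 1) ≤ (n : ℝ) + 1 := by
      calc (m x : ℝ) * gDyson (2 * J) (m x - 1) ≤ ((n : ℝ) + 1) * 1 :=
            mul_le_mul (by linarith [hmx m hm x]) (hg1 _) (hg0 _) (by positivity)
        _ = (n : ℝ) + 1 := mul_one _
    have := Real.sqrt_le_sqrt harg
    exact mul_le_mul (hvtw x) (by rw [hQ]; exact this) (Real.sqrt_nonneg _) (hw0 x)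
  have hb3 : ∀ x, ∀ m ∈ s,
      ‖(-((Real.sqrt (4 / (2 * J)) * v3 x * m x : ℝ) : ℂ) : ℂ)‖ ≤ 2 * (w x * Q) := by
    intro x m hm
    rw [norm_neg, Complex.norm_real, Real.norm_eq_abs, abs_mul, abs_mul,
      abs_of_nonneg (Real.sqrt_nonneg _), Nat.abs_cast]
    have hsq : Real.sqrt (4 / (2 * J)) * (m x : ℝ) ≤ 2 * Q := by
      have h1 : Real.sqrt (4 / (2 * J)) ≤ 2 / Q := by
        have : (4:ℝ) / (2 * J) ≤ 4 / ((n:ℝ) + 1) := by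
          rw [div_le_div_iff₀ hJ0 (by positivity)]
          nlinarith
        calc Real.sqrt (4 / (2 * J)) ≤ Real.sqrt (4 / ((n:ℝ) + 1)) := Real.sqrt_le_sqrt this
          _ = 2 / Q := by
              rw [hQ, Real.sqrt_div (by norm_num : (0:ℝ) ≤ 4),
                show (4:ℝ) = 2 ^ 2 by norm_num, Real.sqrt_sq (by norm_num : (0:ℝ) ≤ 2)]
      calc Real.sqrt (4 / (2 * J)) * (m x : ℝ) ≤ (2 / Q) * ((n:ℝ) + 1) :=
            mul_le_mul h1 (by linarith [hmx m hm x]) (Nat.cast_nonneg _) (by positivity)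
        _ = 2 * (((n:ℝ) + 1) / Q) := by ring
        _ = 2 * Q := by rw [hQ, Real.div_sqrt]
    calc Real.sqrt (4 / (2 * J)) * |v3 x| * (m x : ℝ)
        = (Real.sqrt (4 / (2 * J)) * (m x : ℝ)) * |v3 x| := by ring
      _ ≤ (2 * Q) * (w x) := mul_le_mul hsq (hv3w x) (abs_nonneg _)
          (by positivity)
      _ = 2 * (w x * Q) := by ring
  -- summability of the summand
  have hsummand : ∀ m ∈ s, Summable (fun x => t x m) := by
    intro m hm
    apply Summable.of_norm_bounded (g := fun x => 4 * Q * w x) ((hv1.mul_left (4 * Q)))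
    intro x
    simp only [ht]
    calc ‖_ + _ + _‖ ≤ _ := norm_add₃_le
      _ ≤ w x * Q + w x * Q + 2 * (w x * Q) := by
          gcongr <;> rw [norm_smul]
          · calc ‖_‖ * ‖e _‖ = ‖_‖ := by rw [he.1, mul_one]
              _ ≤ w x * Q := hb1 x m hm
          · calc ‖_‖ * ‖e _‖ = ‖_‖ := by rw [he.1, mul_one]
              _ ≤ w x * Q := hb2 x m hm
          · calc ‖_‖ * ‖e _‖ = ‖_‖ := by rw [he.1, mul_one]
              _ ≤ 2 * (w x * Q) := hb3 x m hm
      _ = 4 * Q * w x := by ring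
  -- FJ applied to ψ
  have hFJm : ∀ m ∈ s, FJ (e m) = ∑' x, t x m := by
    intro m hm
    simp only [ht]
    exact hFJ m (hmle m hm)
  have hFJψ : FJ ψ = ∑' x, ∑ m ∈ s, c m • t x m := by
    rw [hψsum, map_sum,
      Summable.tsum_finsetSum (f := fun m x => c m • t x m) (fun m hm => ((hsummand m hm).const_smul (c m)))]
    refine Finset.sum_congr rfl fun m hm => ?_
    rw [map_smul, hFJm m hm, Summable.tsum_const_smul (c m) (hsummand m hm)]
  -- per-site bound
  have hG : ∀ x, ‖∑ m ∈ s, c m • t x m‖ ≤ (4 * Q * ‖ψ‖) * w x := by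
    intro x
    have hsplit : ∑ m ∈ s, c m • t x m =
        (∑ m ∈ s, (c m * (vt x * Real.sqrt (((m x : ℝ) + 1) * gDyson (2 * J) (m x)))) •
            e (m + Finsupp.single x 1))
        + (∑ m ∈ s, (c m * ((starRingEnd ℂ) (vt x) *
            Real.sqrt ((m x : ℝ) * gDyson (2 * J) (m x - 1)))) • e (m - Finsupp.single x 1))
        + (∑ m ∈ s, (c m * (-((Real.sqrt (4 / (2 * J)) * v3 x * m x : ℝ) : ℂ))) • e m) := by
      rw [← Finset.sum_add_distrib, ← Finset.sum_add_distrib]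
      refine Finset.sum_congr rfl fun m hm => ?_
      simp only [ht, smul_add, smul_smul]
    rw [hsplit]
    have h1 : ‖∑ m ∈ s, (c m * (vt x * Real.sqrt (((m x : ℝ) + 1) * gDyson (2 * J) (m x)))) •
        e (m + Finsupp.single x 1)‖ ≤ (w x * Q) * ‖ψ‖ := by
      rw [hψsum]
      refine aux_norm_sum_le he s _ c (fun m => m + Finsupp.single x 1)
        (fun m _ m' _ _ _ h => aux_add_single_inj h) (w x * Q) (by positivity) ?_
      intro m hm
      rw [norm_mul, mul_comm]
      exact mul_le_mul_of_nonneg_right (hb1 x m hm) (norm_nonneg _)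
    have h2 : ‖∑ m ∈ s, (c m * ((starRingEnd ℂ) (vt x) *
        Real.sqrt ((m x : ℝ) * gDyson (2 * J) (m x - 1)))) • e (m - Finsupp.single x 1)‖
        ≤ (w x * Q) * ‖ψ‖ := by
      rw [hψsum]
      refine aux_norm_sum_le he s _ c (fun m => m - Finsupp.single x 1) ?_
        (w x * Q) (by positivity) ?_
      · intro m _ m' _ hd hd' hfe
        have hmx0 : m x ≠ 0 := by
          intro h0
          apply hd
          simp [h0]
        have hmx0' : m' x ≠ 0 := by
          intro h0
          apply hd'
          simp [h0]
        exact aux_sub_single_inj hmx0 hmx0' hfe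
      · intro m hm
        rw [norm_mul, mul_comm]
        exact mul_le_mul_of_nonneg_right (hb2 x m hm) (norm_nonneg _)
    have h3 : ‖∑ m ∈ s, (c m * (-((Real.sqrt (4 / (2 * J)) * v3 x * m x : ℝ) : ℂ))) • e m‖
        ≤ (2 * (w x * Q)) * ‖ψ‖ := by
      rw [hψsum]
      have := aux_norm_sum_le he s
        (fun m => c m * (-((Real.sqrt (4 / (2 * J)) * v3 x * m x : ℝ) : ℂ))) c id
        (fun m _ m' _ _ _ h => h) (2 * (w x * Q)) (by positivity) ?_
      · simpa using this
      · intro m hm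
        rw [norm_mul, mul_comm]
        exact mul_le_mul_of_nonneg_right (hb3 x m hm) (norm_nonneg _)
    calc ‖_ + _ + _‖ ≤ _ := norm_add₃_le
      _ ≤ (w x * Q) * ‖ψ‖ + (w x * Q) * ‖ψ‖ + (2 * (w x * Q)) * ‖ψ‖ := by gcongr
      _ = (4 * Q * ‖ψ‖) * w x := by ring
  -- conclusion
  have hGsum : Summable (fun x => ‖∑ m ∈ s, c m • t x m‖) :=
    Summable.of_nonneg_of_le (fun x => norm_nonneg _) hG (hv1.mul_left (4 * Q * ‖ψ‖))
  calc ‖FJ ψ‖ = ‖∑' x, ∑ m ∈ s, c m • t x m‖ := by rw [hFJψ]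
    _ ≤ ∑' x, ‖∑ m ∈ s, c m • t x m‖ := norm_tsum_le_tsum_norm hGsum
    _ ≤ ∑' x, (4 * Q * ‖ψ‖) * w x := Summable.tsum_le_tsum hG hGsum (hv1.mul_left (4 * Q * ‖ψ‖))
    _ = (4 * Q * ‖ψ‖) * ∑' x, w x := tsum_mul_left
    _ = 4 * l1norm vt v3 * Q * ‖ψ‖ := by rw [l1norm]; ring
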